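/- Let A > 2 and consider a four-body kite configuration q_1 = (−x_2, 0), q_2 = (x_2, 0), q_3 = (0, y_3), q_4 = (0, y_4) with x_2 > 0, y_3 > y_4, distinct points, and positive masses m_1 = m_2, m_3, m_4. Let H be the Hessian of f = M I/2 + U/(A−2) at this configuration. Then in the orthogonal-type basis ṽ_{a,3} = (ṽ_{1,3} + ṽ_{2,3})/√2, ṽ_{a,4} = (ṽ_{1,4} + ṽ_{2,4})/√2, ṽ_{3,4}, ṽ_{s,3} = (ṽ_{1,3} − ṽ_{2,3})/√2, ṽ_{s,4} = (ṽ_{1,4} − ṽ_{2,4})/√2 of rescaled twist vectors, the matrix of H is block-diagonal: every entry pairing one of {ṽ_{a,3}, ṽ_{a,4}, ṽ_{3,4}} with one of {ṽ_{s,3}, ṽ_{s,4}} vanishes, so H decomposes into a 3×3 block H_a and a 2×2 block H_s. -/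

import Mathlib

noncomputable section

open Finset

/-- A point in the Euclidean plane with the given coordinates. -/
def pt (a b : ℝ) : EuclideanSpace ℝ (Fin 2) := (WithLp.equiv 2 (Fin 2 → ℝ)).symm ![a, b]

/-- The configuration space of `n` planar points, identified with `ℝ^{2n}`. -/
abbrev Conf (n : ℕ) := Fin n → EuclideanSpace ℝ (Fin 2)

/-- The twist vector `v_{i,j}`: its only nonzero components are
`(v_{i,j})_{x_i} = m_j (y_i - y_j)`, `(v_{i,j})_{y_i} = -m_j (x_i - x_j)`,
`(v_{i,j})_{x_j} = -m_i (y_i - y_j)`, `(v_{i,j})_{y_j} = m_i (x_i - x_j)`. -/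
def twist {n : ℕ} (m : Fin n → ℝ) (q : Conf n) (i j : Fin n) : Conf n :=
  fun k =>
    if k = i then pt (m j * (q i 1 - q j 1)) (-(m j * (q i 0 - q j 0)))
    else if k = j then pt (-(m i * (q i 1 - q j 1))) (m i * (q i 0 - q j 0))
    else 0

/-- The dot product on the configuration space `ℝ^{2n}`. -/
def dot {n : ℕ} (v w : Conf n) : ℝ := ∑ k, ∑ t, v k t * w k t

/-- Twice the signed area `Λ_{i,j,k}` of the triangle `q_i q_j q_k`. -/
def lam {n : ℕ} (q : Conf n) (i j k : Fin n) : ℝ :=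
  (q i 0 - q j 0) * (q i 1 - q k 1) - (q i 0 - q k 0) * (q i 1 - q j 1)

/-- The moment of inertia about the center of mass. -/
def Ifun {n : ℕ} (m : Fin n → ℝ) (q : Conf n) : ℝ :=
  ∑ i, m i * ‖q i - (∑ i, m i)⁻¹ • ∑ j, m j • q j‖ ^ 2

/-- The homogeneous potential `U = ∑_{i<j} m_i m_j r_{i,j}^{2-A}`. -/
def Ufun {n : ℕ} (A : ℝ) (m : Fin n → ℝ) (q : Conf n) : ℝ :=
  ∑ p ∈ Finset.univ.filter (fun p : Fin n × Fin n => p.1 < p.2),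
    m p.1 * m p.2 * ‖q p.1 - q p.2‖ ^ (2 - A)

/-- `f = M I / 2 + U / (A - 2)`. -/
def fFun {n : ℕ} (A : ℝ) (m : Fin n → ℝ) (q : Conf n) : ℝ :=
  (∑ i, m i) * Ifun m q / 2 + Ufun A m q / (A - 2)

/-- The Hessian of `f` at `q`, as a bilinear form: `v ᵀ H w`. -/
def hess {n : ℕ} (A : ℝ) (m : Fin n → ℝ) (q : Conf n) (v w : Conf n) : ℝ :=
  fderiv ℝ (fderiv ℝ (fFun A m)) q v w


namespace KiteSym

lemma pt_app0 (a b : ℝ) : pt a b 0 = a := rfl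
lemma pt_app1 (a b : ℝ) : pt a b 1 = b := rfl

def rhoL : EuclideanSpace ℝ (Fin 2) ≃ₗ[ℝ] EuclideanSpace ℝ (Fin 2) where
  toFun v := pt (-(v 0)) (v 1)
  invFun v := pt (-(v 0)) (v 1)
  map_add' a b := by ext i; fin_cases i <;> simp [pt] <;> ring
  map_smul' c a := by ext i; fin_cases i <;> simp [pt]
  left_inv v := by ext i; fin_cases i <;> simp [pt]
  right_inv v := by ext i; fin_cases i <;> simp [pt]

lemma rhoL_apply (v : EuclideanSpace ℝ (Fin 2)) : rhoL v = pt (-(v 0)) (v 1) := rfl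

lemma norm_rhoL_sub (a b : EuclideanSpace ℝ (Fin 2)) : ‖rhoL a - rhoL b‖ = ‖a - b‖ := by
  rw [← map_sub, EuclideanSpace.norm_eq, EuclideanSpace.norm_eq]
  congr 1
  rw [Fin.sum_univ_two, Fin.sum_univ_two]
  have h0 : (rhoL (a - b)) 0 = -((a - b) 0) := rfl
  have h1 : (rhoL (a - b)) 1 = (a - b) 1 := rfl
  rw [h0, h1]
  simp [Real.norm_eq_abs, sq_abs]
  ring

lemma norm_rhoL (a : EuclideanSpace ℝ (Fin 2)) : ‖rhoL a‖ = ‖a‖ := by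
  simpa [map_zero] using norm_rhoL_sub a 0

def sw : Equiv.Perm (Fin 4) := Equiv.swap 0 1

lemma sw_sw (k : Fin 4) : sw (sw k) = k := by revert k; decide
lemma sw0 : sw 0 = 1 := by decide
lemma sw1 : sw 1 = 0 := by decide
lemma sw2 : sw 2 = 2 := by decide
lemma sw3 : sw 3 = 3 := by decide

lemma rhoL_rhoL (v : EuclideanSpace ℝ (Fin 2)) : rhoL (rhoL v) = v := by
  have h : ⇑rhoL.symm = ⇑rhoL := rfl
  conv_lhs => rw [← h]
  exact rhoL.symm_apply_apply v

def sigL : Conf 4 ≃ₗ[ℝ] Conf 4 where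
  toFun p := fun k => rhoL (p (sw k))
  invFun p := fun k => rhoL (p (sw k))
  map_add' p r := by funext k; simp
  map_smul' c p := by funext k; simp
  left_inv p := by funext k; simp [rhoL_rhoL, sw_sw]
  right_inv p := by funext k; simp [rhoL_rhoL, sw_sw]

def sigE : Conf 4 ≃L[ℝ] Conf 4 := sigL.toContinuousLinearEquiv

lemma sigE_apply (p : Conf 4) (k : Fin 4) : sigE p k = rhoL (p (sw k)) := rfl

lemma norm_sigE (p : Conf 4) (i j : Fin 4) :
    ‖sigE p i - sigE p j‖ = ‖p (sw i) - p (sw j)‖ := by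
  rw [sigE_apply, sigE_apply, norm_rhoL_sub]

variable {A : ℝ} {m : Fin 4 → ℝ}

lemma msw (hm01 : m 0 = m 1) (i : Fin 4) : m (sw i) = m i := by
  fin_cases i <;> simp [sw0, sw1, sw2, sw3] <;> rw [hm01]

lemma Ifun_sig (hm01 : m 0 = m 1) (p : Conf 4) : Ifun m (sigE p) = Ifun m p := by
  have hc : ∑ j, m j • (sigE p j) = rhoL (∑ j, m j • p j) := by
    rw [map_sum, ← Equiv.sum_comp sw (fun j => rhoL (m j • p j))]
    refine Finset.sum_congr rfl fun j _ => ?_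
    rw [sigE_apply, msw hm01 j, map_smul]
  unfold Ifun
  rw [hc]
  calc ∑ i, m i * ‖sigE p i - (∑ i, m i)⁻¹ • rhoL (∑ j, m j • p j)‖ ^ 2
      = ∑ i, m (sw i) * ‖p (sw i) - (∑ i, m i)⁻¹ • ∑ j, m j • p j‖ ^ 2 := by
        refine Finset.sum_congr rfl fun i _ => ?_
        rw [msw hm01 i, sigE_apply, ← map_smul, ← map_sub, norm_rhoL]
    _ = ∑ i, m i * ‖p i - (∑ i, m i)⁻¹ • ∑ j, m j • p j‖ ^ 2 :=
        Equiv.sum_comp sw (fun i => m i * ‖p i - (∑ i, m i)⁻¹ • ∑ j, m j • p j‖ ^ 2)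

lemma Ufun_four (p : Conf 4) : Ufun A m p =
    m 0 * m 1 * ‖p 0 - p 1‖ ^ (2 - A) + m 0 * m 2 * ‖p 0 - p 2‖ ^ (2 - A) +
    m 0 * m 3 * ‖p 0 - p 3‖ ^ (2 - A) + m 1 * m 2 * ‖p 1 - p 2‖ ^ (2 - A) +
    m 1 * m 3 * ‖p 1 - p 3‖ ^ (2 - A) + m 2 * m 3 * ‖p 2 - p 3‖ ^ (2 - A) := by
  have hfil : Finset.univ.filter (fun p : Fin 4 × Fin 4 => p.1 < p.2) =
      {(0,1),(0,2),(0,3),(1,2),(1,3),(2,3)} := by decide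
  rw [Ufun, hfil, Finset.sum_insert (by decide), Finset.sum_insert (by decide),
    Finset.sum_insert (by decide), Finset.sum_insert (by decide),
    Finset.sum_insert (by decide), Finset.sum_singleton]
  ring

lemma Ufun_sig (hm01 : m 0 = m 1) (p : Conf 4) : Ufun A m (sigE p) = Ufun A m p := by
  rw [Ufun_four, Ufun_four]
  simp only [norm_sigE, sw0, sw1, sw2, sw3]
  rw [hm01, norm_sub_rev (p 1) (p 0)]
  ring

lemma fFun_sig (hm01 : m 0 = m 1) : fFun A m ∘ ⇑sigE = fFun A m := by
  funext p
  rw [Function.comp_apply, fFun, fFun, Ifun_sig hm01, Ufun_sig hm01]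

lemma hess_sig (hm01 : m 0 = m 1) (q : Conf 4) (hqfix : sigE q = q) (v w : Conf 4) :
    hess A m q v w = hess A m q (sigE v) (sigE w) := by
  have hsymm : ⇑sigE.symm = ⇑sigE := rfl
  set τ : (Conf 4 →L[ℝ] ℝ) ≃L[ℝ] (Conf 4 →L[ℝ] ℝ) :=
    sigE.arrowCongr (ContinuousLinearEquiv.refl ℝ ℝ) with hτ
  have key : ∀ p, fderiv ℝ (fFun A m) p
      = (fderiv ℝ (fFun A m) (sigE p)).comp (sigE : Conf 4 →L[ℝ] Conf 4) := fun p => by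
    conv_lhs => rw [← fFun_sig hm01]
    exact sigE.comp_right_fderiv
  have hgfun : fderiv ℝ (fFun A m) = ⇑τ ∘ (fderiv ℝ (fFun A m) ∘ ⇑sigE) := by
    funext p
    ext u
    rw [key p]
    simp only [hτ, Function.comp_apply, ContinuousLinearEquiv.arrowCongr_apply,
      ContinuousLinearMap.coe_comp', Function.comp_apply, hsymm,
      ContinuousLinearEquiv.refl_apply, ContinuousLinearEquiv.coe_coe]
  show fderiv ℝ (fderiv ℝ (fFun A m)) q v w = fderiv ℝ (fderiv ℝ (fFun A m)) q (sigE v) (sigE w)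
  conv_lhs => rw [hgfun]
  rw [ContinuousLinearEquiv.comp_fderiv, ContinuousLinearMap.coe_comp',
    Function.comp_apply, sigE.comp_right_fderiv, hqfix]
  rw [ContinuousLinearMap.coe_comp', Function.comp_apply]
  simp only [hτ, ContinuousLinearEquiv.coe_coe, ContinuousLinearEquiv.arrowCongr_apply,
    hsymm, ContinuousLinearEquiv.refl_apply]

lemma hess_neg_left (q v w : Conf 4) : hess A m q (-v) w = -(hess A m q v w) := by
  rw [hess, hess, map_neg, ContinuousLinearMap.neg_apply]

end KiteSym

/-- For a kite configuration with `m₁ = m₂`, in the basis of rescaled twist vectors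
`ṽ_{a,3} = (ṽ₁₃ + ṽ₂₃)/√2`, `ṽ_{a,4} = (ṽ₁₄ + ṽ₂₄)/√2`, `ṽ₃₄`,
`ṽ_{s,3} = (ṽ₁₃ - ṽ₂₃)/√2`, `ṽ_{s,4} = (ṽ₁₄ - ṽ₂₄)/√2`, the Hessian of
`f = M I/2 + U/(A-2)` is block diagonal: every entry pairing a symmetric-block vector
with an antisymmetric-block vector vanishes. -/
theorem kite_hessian_block_diagonal (A : ℝ) (hA : 2 < A)
    (m : Fin 4 → ℝ) (hm : ∀ i, 0 < m i) (x₂ y₃ y₄ : ℝ)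
    (hx : 0 < x₂) (hy : y₄ < y₃) (q : Conf 4)
    (hq0 : q 0 = pt (-x₂) 0) (hq1 : q 1 = pt x₂ 0)
    (hq2 : q 2 = pt 0 y₃) (hq3 : q 3 = pt 0 y₄)
    (hq : Function.Injective q)
    (hm01 : m 0 = m 1) :
    ∀ v ∈ ({(Real.sqrt 2)⁻¹ • ((m 0 * m 2 * ‖q 0 - q 2‖)⁻¹ • twist m q 0 2 +
              (m 1 * m 2 * ‖q 1 - q 2‖)⁻¹ • twist m q 1 2),
            (Real.sqrt 2)⁻¹ • ((m 0 * m 3 * ‖q 0 - q 3‖)⁻¹ • twist m q 0 3 +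
              (m 1 * m 3 * ‖q 1 - q 3‖)⁻¹ • twist m q 1 3),
            (m 2 * m 3 * ‖q 2 - q 3‖)⁻¹ • twist m q 2 3} : Set (Conf 4)),
    ∀ w ∈ ({(Real.sqrt 2)⁻¹ • ((m 0 * m 2 * ‖q 0 - q 2‖)⁻¹ • twist m q 0 2 -
              (m 1 * m 2 * ‖q 1 - q 2‖)⁻¹ • twist m q 1 2),
            (Real.sqrt 2)⁻¹ • ((m 0 * m 3 * ‖q 0 - q 3‖)⁻¹ • twist m q 0 3 -
              (m 1 * m 3 * ‖q 1 - q 3‖)⁻¹ • twist m q 1 3)} : Set (Conf 4)),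
    hess A m q v w = 0 ∧ hess A m q w v = 0 := by
  classical
  open KiteSym in
  -- the reflection fixes the kite configuration
  have hqfix : sigE q = q := by
    funext k; ext i
    fin_cases k <;> fin_cases i <;>
      simp [sigE_apply, rhoL_apply, sw0, sw1, sw2, sw3, hq0, hq1, hq2, hq3, pt_app0, pt_app1]
  -- how the reflection acts on twist vectors
  have hT02 : sigE (twist m q 0 2) = -(twist m q 1 2) := by
    funext k; ext i
    fin_cases k <;> fin_cases i <;>
      simp [sigE_apply, rhoL_apply, sw, Equiv.swap_apply_def, twist, pt_app0, pt_app1,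
        hq0, hq1, hq2, hq3, hm01] <;> ring
  have hT12 : sigE (twist m q 1 2) = -(twist m q 0 2) := by
    funext k; ext i
    fin_cases k <;> fin_cases i <;>
      simp [sigE_apply, rhoL_apply, sw, Equiv.swap_apply_def, twist, pt_app0, pt_app1,
        hq0, hq1, hq2, hq3, hm01] <;> ring
  have hT03 : sigE (twist m q 0 3) = -(twist m q 1 3) := by
    funext k; ext i
    fin_cases k <;> fin_cases i <;>
      simp [sigE_apply, rhoL_apply, sw, Equiv.swap_apply_def, twist, pt_app0, pt_app1,
        hq0, hq1, hq2, hq3, hm01] <;> ring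
  have hT13 : sigE (twist m q 1 3) = -(twist m q 0 3) := by
    funext k; ext i
    fin_cases k <;> fin_cases i <;>
      simp [sigE_apply, rhoL_apply, sw, Equiv.swap_apply_def, twist, pt_app0, pt_app1,
        hq0, hq1, hq2, hq3, hm01] <;> ring
  have hT23 : sigE (twist m q 2 3) = -(twist m q 2 3) := by
    funext k; ext i
    fin_cases k <;> fin_cases i <;>
      simp [sigE_apply, rhoL_apply, sw, Equiv.swap_apply_def, twist, pt_app0, pt_app1,
        hq0, hq1, hq2, hq3, hm01] <;> ring
  -- equal distances in the kite
  have hn2 : ‖q 0 - q 2‖ = ‖q 1 - q 2‖ := by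
    rw [hq0, hq1, hq2, EuclideanSpace.norm_eq, EuclideanSpace.norm_eq]
    congr 1
    rw [Fin.sum_univ_two, Fin.sum_univ_two]
    simp [pt, Real.norm_eq_abs, sq_abs]
  have hn3 : ‖q 0 - q 3‖ = ‖q 1 - q 3‖ := by
    rw [hq0, hq1, hq3, EuclideanSpace.norm_eq, EuclideanSpace.norm_eq]
    congr 1
    rw [Fin.sum_univ_two, Fin.sum_univ_two]
    simp [pt, Real.norm_eq_abs, sq_abs]
  have hc2 : (m 0 * m 2 * ‖q 0 - q 2‖)⁻¹ = (m 1 * m 2 * ‖q 1 - q 2‖)⁻¹ := by rw [hm01, hn2]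
  have hc3 : (m 0 * m 3 * ‖q 0 - q 3‖)⁻¹ = (m 1 * m 3 * ‖q 1 - q 3‖)⁻¹ := by rw [hm01, hn3]
  -- action on the basis vectors
  have hva3 : sigE ((Real.sqrt 2)⁻¹ • ((m 0 * m 2 * ‖q 0 - q 2‖)⁻¹ • twist m q 0 2 +
      (m 1 * m 2 * ‖q 1 - q 2‖)⁻¹ • twist m q 1 2)) =
      -((Real.sqrt 2)⁻¹ • ((m 0 * m 2 * ‖q 0 - q 2‖)⁻¹ • twist m q 0 2 +
      (m 1 * m 2 * ‖q 1 - q 2‖)⁻¹ • twist m q 1 2)) := by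
    rw [map_smul, map_add, map_smul, map_smul, hT02, hT12, hc2]
    module
  have hva4 : sigE ((Real.sqrt 2)⁻¹ • ((m 0 * m 3 * ‖q 0 - q 3‖)⁻¹ • twist m q 0 3 +
      (m 1 * m 3 * ‖q 1 - q 3‖)⁻¹ • twist m q 1 3)) =
      -((Real.sqrt 2)⁻¹ • ((m 0 * m 3 * ‖q 0 - q 3‖)⁻¹ • twist m q 0 3 +
      (m 1 * m 3 * ‖q 1 - q 3‖)⁻¹ • twist m q 1 3)) := by
    rw [map_smul, map_add, map_smul, map_smul, hT03, hT13, hc3]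
    module
  have hv34 : sigE ((m 2 * m 3 * ‖q 2 - q 3‖)⁻¹ • twist m q 2 3) =
      -((m 2 * m 3 * ‖q 2 - q 3‖)⁻¹ • twist m q 2 3) := by
    rw [map_smul, hT23]
    module
  have hws3 : sigE ((Real.sqrt 2)⁻¹ • ((m 0 * m 2 * ‖q 0 - q 2‖)⁻¹ • twist m q 0 2 -
      (m 1 * m 2 * ‖q 1 - q 2‖)⁻¹ • twist m q 1 2)) =
      (Real.sqrt 2)⁻¹ • ((m 0 * m 2 * ‖q 0 - q 2‖)⁻¹ • twist m q 0 2 -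
      (m 1 * m 2 * ‖q 1 - q 2‖)⁻¹ • twist m q 1 2) := by
    rw [map_smul, map_sub, map_smul, map_smul, hT02, hT12, hc2]
    module
  have hws4 : sigE ((Real.sqrt 2)⁻¹ • ((m 0 * m 3 * ‖q 0 - q 3‖)⁻¹ • twist m q 0 3 -
      (m 1 * m 3 * ‖q 1 - q 3‖)⁻¹ • twist m q 1 3)) =
      (Real.sqrt 2)⁻¹ • ((m 0 * m 3 * ‖q 0 - q 3‖)⁻¹ • twist m q 0 3 -
      (m 1 * m 3 * ‖q 1 - q 3‖)⁻¹ • twist m q 1 3) := by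
    rw [map_smul, map_sub, map_smul, map_smul, hT03, hT13, hc3]
    module
  -- the general symmetry argument
  have main : ∀ v w : Conf 4, sigE v = -v → sigE w = w →
      hess A m q v w = 0 ∧ hess A m q w v = 0 := by
    intro v w hv hw
    constructor
    · have h := hess_sig (A := A) hm01 q hqfix v w
      rw [hv, hw, hess_neg_left] at h
      linarith
    · have hneg : hess A m q w (-v) = -(hess A m q w v) := by
        rw [hess, hess, map_neg]
      have h := hess_sig (A := A) hm01 q hqfix w v
      rw [hv, hw, hneg] at h
      linarith
  intro v hv w hw
  simp only [Set.mem_insert_iff, Set.mem_singleton_iff] at hv hw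
  rcases hv with rfl | rfl | rfl <;> rcases hw with rfl | rfl
  · exact main _ _ hva3 hws3
  · exact main _ _ hva3 hws4
  · exact main _ _ hva4 hws3
  · exact main _ _ hva4 hws4
  · exact main _ _ hv34 hws3
  · exact main _ _ hv34 hws4
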